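/- Define S(u) := Li₂(e^{−φ(u)−2u}) − Li₂(e^{φ(u)−2u}) + 2u·φ(u) for real u > κ := (1/2)·arccosh(3/2), where φ(u) := arccosh(cosh(2u) − 1/2) and Li₂ is the dilogarithm. Then S is differentiable on (κ, ∞) and dS/du = 2·log((e^{φ(u)} − e^{−2u})/(1 − e^{φ(u)−2u})) = 2·log ℓ(u). -/

import Mathlib

set_option maxHeartbeats 1000000

noncomputable def arcosh (x : ℝ) : ℝ := Real.log (x + Real.sqrt (x^2 - 1))

noncomputable def kappa : ℝ := arcosh (3/2) / 2

noncomputable def phi (ξ : ℝ) : ℝ := arcosh (Real.cosh (2*ξ) - 1/2)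

noncomputable def ell (u : ℝ) : ℝ :=
  Real.cosh (4*u) - Real.cosh (2*u) - 1 +
    Real.sinh (2*u) * Real.sqrt ((2*Real.cosh (2*u)+1) * (2*Real.cosh (2*u)-3))

noncomputable def Li2 (z : ℝ) : ℝ := ∑' n : ℕ, z^n / (n:ℝ)^2

noncomputable def Sfun (u : ℝ) : ℝ :=
  Li2 (Real.exp (-phi u - 2*u)) - Li2 (Real.exp (phi u - 2*u)) + 2*u*(phi u)


lemma hasDerivAt_Li2 {z : ℝ} (h0 : 0 < z) (h1 : z < 1) :
    HasDerivAt Li2 (-Real.log (1 - z) / z) z := by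
  set r : ℝ := (1 + z) / 2 with hr
  have hr0 : 0 < r := by positivity
  have hr1 : r < 1 := by simp only [hr]; linarith
  have hzr : z < r := by simp only [hr]; linarith
  have hzne : z ≠ 0 := h0.ne'
  -- the series and its derivative
  have key : HasDerivAt (fun x : ℝ => ∑' n : ℕ, x ^ n / (n : ℝ) ^ 2)
      (∑' n : ℕ, (n : ℝ) * z ^ (n - 1) / (n : ℝ) ^ 2) z := by
    apply hasDerivAt_tsum_of_isPreconnected
      (u := fun n : ℕ => r ^ n / r)
      (g' := fun (n : ℕ) (x : ℝ) => (n : ℝ) * x ^ (n - 1) / (n : ℝ) ^ 2)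
      (t := Set.Ioo (-r) r) (y₀ := 0)
    · exact (summable_geometric_of_lt_one hr0.le hr1).div_const r
    · exact isOpen_Ioo
    · exact isPreconnected_Ioo
    · intro n y _
      exact (hasDerivAt_pow n y).div_const _
    · intro n y hy
      have hyr : |y| < r := abs_lt.2 ⟨hy.1, hy.2⟩
      match n with
      | 0 => simp; positivity
      | Nat.succ m =>
        have : ((m : ℝ) + 1) * y ^ m / ((m : ℝ) + 1) ^ 2 = y ^ m / ((m : ℝ) + 1) := by
          field_simp
        push_cast
        rw [this]
        have h1 : |y ^ m / ((m : ℝ) + 1)| ≤ |y| ^ m := by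
          rw [abs_div, abs_pow]
          have : (1 : ℝ) ≤ |(m : ℝ) + 1| := by
            rw [abs_of_pos (by positivity)]; push_cast; linarith [Nat.cast_nonneg (α := ℝ) m]
          calc |y| ^ m / |(m : ℝ) + 1| ≤ |y| ^ m / 1 :=
                div_le_div_of_nonneg_left (by positivity) one_pos this |>.trans_eq rfl
            _ = |y| ^ m := div_one _
        calc ‖y ^ m / ((m : ℝ) + 1)‖ ≤ |y| ^ m := h1
          _ ≤ r ^ m := pow_le_pow_left₀ (abs_nonneg _) hyr.le m
          _ = r ^ (m + 1) / r := by field_simp [pow_succ]; ring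
    · exact Set.mem_Ioo.2 ⟨by linarith, hr0⟩
    · have : (fun n : ℕ => (0 : ℝ) ^ n / (n : ℝ) ^ 2) = fun _ => (0 : ℝ) := by
        funext n
        match n with
        | 0 => norm_num
        | Nat.succ m => simp [pow_succ]
      rw [this]; exact summable_zero
    · exact Set.mem_Ioo.2 ⟨by linarith, hzr⟩
  -- identify the sum of derivatives with -log(1-z)/z
  have habs : |z| < 1 := abs_lt.2 ⟨by linarith, h1⟩
  have H := Real.hasSum_pow_div_log_of_abs_lt_one habs
  have H2 : HasSum (fun n : ℕ => ((n : ℝ) + 1) * z ^ (n + 1 - 1) / ((n : ℝ) + 1) ^ 2)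
      (-Real.log (1 - z) / z) := by
    have := H.div_const z
    convert this using 2 with n
    · rfl
    rw [Nat.add_sub_cancel]
    field_simp
    ring
  have H3 : HasSum (fun n : ℕ => (n : ℝ) * z ^ (n - 1) / (n : ℝ) ^ 2)
      (-Real.log (1 - z) / z) := by
    have h4 : HasSum (fun n : ℕ => ((n + 1 : ℕ) : ℝ) * z ^ (n + 1 - 1) / ((n + 1 : ℕ) : ℝ) ^ 2)
        (-Real.log (1 - z) / z) := by
      convert H2 using 2 with n
      push_cast
      ring_nf
    have := (hasSum_nat_add_iff
        (f := fun n : ℕ => (n : ℝ) * z ^ (n - 1) / (n : ℝ) ^ 2) 1).1 h4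
    simpa using this
  have hsum_eq : (∑' n : ℕ, (n : ℝ) * z ^ (n - 1) / (n : ℝ) ^ 2) = -Real.log (1 - z) / z :=
    H3.tsum_eq
  rw [hsum_eq] at key
  exact key


lemma exp_arcosh {x : ℝ} (hx : 1 ≤ x) : Real.exp (arcosh x) = x + Real.sqrt (x^2 - 1) := by
  have h0 : 0 < x + Real.sqrt (x^2 - 1) := by
    have := Real.sqrt_nonneg (x^2 - 1); linarith
  exact Real.exp_log h0

lemma exp_neg_arcosh {x : ℝ} (hx : 1 ≤ x) : Real.exp (-arcosh x) = x - Real.sqrt (x^2 - 1) := by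
  have hs : Real.sqrt (x^2 - 1) ^ 2 = x^2 - 1 := Real.sq_sqrt (by nlinarith)
  rw [Real.exp_neg, exp_arcosh hx]
  exact inv_eq_of_mul_eq_one_right (by nlinarith)

lemma cosh_arcosh {x : ℝ} (hx : 1 ≤ x) : Real.cosh (arcosh x) = x := by
  rw [Real.cosh_eq, exp_arcosh hx, exp_neg_arcosh hx]; ring

lemma phi_hasDerivAt {u : ℝ} (hc : 1 < Real.cosh (2*u) - 1/2) : ∃ P, HasDerivAt phi P u := by
  have h2x : HasDerivAt (fun x : ℝ => 2*x) 2 u := by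
    simpa using (hasDerivAt_id u).const_mul 2
  have h1 : HasDerivAt (fun x : ℝ => Real.cosh (2*x) - 1/2) (Real.sinh (2*u) * 2) u :=
    ((Real.hasDerivAt_cosh (2*u)).comp u h2x).sub_const _
  set c := Real.cosh (2*u) - 1/2 with hcdef
  have hne : c^2 - 1 ≠ 0 := by nlinarith
  have h2 : HasDerivAt (fun x : ℝ => (Real.cosh (2*x) - 1/2)^2 - 1)
      ((2 * c ^ 1) * (Real.sinh (2*u) * 2)) u :=
    ((hasDerivAt_pow 2 c).comp u h1).sub_const _
  have h3 := (Real.hasDerivAt_sqrt hne).comp u h2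
  have h4 := h1.add h3
  have hpos : c + Real.sqrt (c^2 - 1) ≠ 0 := by
    have := Real.sqrt_nonneg (c^2 - 1); positivity
  have h5 := h4.log hpos
  have h6 : DifferentiableAt ℝ phi u := h5.differentiableAt
  exact ⟨deriv phi u, h6.hasDerivAt⟩

theorem stmt15 :
    DifferentiableOn ℝ Sfun (Set.Ioi kappa) ∧
    ∀ u ∈ Set.Ioi kappa,
      deriv Sfun u =
        2 * Real.log ((Real.exp (phi u) - Real.exp (-(2*u))) / (1 - Real.exp (phi u - 2*u))) ∧
      2 * Real.log ((Real.exp (phi u) - Real.exp (-(2*u))) / (1 - Real.exp (phi u - 2*u))) =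
        2 * Real.log (ell u) := by
  have main : ∀ u ∈ Set.Ioi kappa,
      HasDerivAt Sfun
        (2 * Real.log ((Real.exp (phi u) - Real.exp (-(2*u))) / (1 - Real.exp (phi u - 2*u)))) u ∧
      2 * Real.log ((Real.exp (phi u) - Real.exp (-(2*u))) / (1 - Real.exp (phi u - 2*u))) =
        2 * Real.log (ell u) := by
    intro u hu
    rw [Set.mem_Ioi] at hu
    -- basic inequalities
    have hk0 : 0 ≤ arcosh (3/2) := by
      unfold arcosh
      apply Real.log_nonneg
      have := Real.sqrt_nonneg ((3/2:ℝ)^2 - 1); linarith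
    have hu0 : 0 < 2*u := by
      have : kappa = arcosh (3/2) / 2 := rfl
      rw [this] at hu; linarith
    have hk : arcosh (3/2) < 2*u := by
      have : kappa = arcosh (3/2) / 2 := rfl
      rw [this] at hu; linarith
    have hCgt : 3/2 < Real.cosh (2*u) := by
      have h32 : Real.cosh (arcosh (3/2)) = 3/2 := cosh_arcosh (by norm_num)
      rw [← h32]
      apply Real.cosh_lt_cosh.2
      rwa [abs_of_nonneg hk0, abs_of_pos hu0]
    have hc1' : 1 < Real.cosh (2*u) - 1/2 := by linarith
    obtain ⟨c, hcdef⟩ : ∃ c : ℝ, c = Real.cosh (2*u) - 1/2 := ⟨_, rfl⟩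
    have hc1 : 1 < c := by rw [hcdef]; linarith
    obtain ⟨s, hsdef⟩ : ∃ s : ℝ, s = Real.sqrt (c^2 - 1) := ⟨_, rfl⟩
    have hs2 : s^2 = c^2 - 1 := by rw [hsdef]; exact Real.sq_sqrt (by nlinarith)
    have hs0 : 0 < s := by rw [hsdef]; exact Real.sqrt_pos.2 (by nlinarith)
    have hφarc : phi u = arcosh c := by rw [hcdef]; rfl
    have hexpφ : Real.exp (phi u) = c + s := by rw [hφarc, hsdef]; exact exp_arcosh hc1.le
    have hexpnegφ : Real.exp (-phi u) = c - s := by rw [hφarc, hsdef]; exact exp_neg_arcosh hc1.le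
    obtain ⟨E, hEdef⟩ : ∃ E : ℝ, E = Real.exp (2*u) := ⟨_, rfl⟩
    have hE0 : 0 < E := by rw [hEdef]; exact Real.exp_pos _
    have hE1 : 1 < E := by
      rw [hEdef, show (1:ℝ) = Real.exp 0 by simp]
      exact Real.exp_lt_exp.2 hu0
    have hC : Real.cosh (2*u) = (E + E⁻¹)/2 := by rw [hEdef, Real.cosh_eq, Real.exp_neg]
    have hSh : Real.sinh (2*u) = (E - E⁻¹)/2 := by rw [hEdef, Real.sinh_eq, Real.exp_neg]
    have hcE : 2*c*E = E^2 - E + 1 := by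
      rw [hcdef, hC]; field_simp; ring
    have hShpos : 0 < Real.sinh (2*u) := by rwa [Real.sinh_pos_iff]
    have hφlt : phi u < 2*u := by
      have h1 : s < Real.sinh (2*u) + 1/2 := by
        have hineq : s^2 < (Real.sinh (2*u) + 1/2)^2 := by
          nlinarith [Real.cosh_sq_sub_sinh_sq (2*u), hs2, hcdef, hCgt, hShpos]
        nlinarith [hineq, hs0, hShpos]
      have hlt : c + s < E := by
        have h2 := Real.cosh_add_sinh (2*u)
        rw [hcdef, hEdef, ← h2]; linarith
      have hexplt : Real.exp (phi u) < Real.exp (2*u) := by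
        rw [hexpφ, ← hEdef]; exact hlt
      exact Real.exp_lt_exp.1 hexplt
    have hφ0 : 0 < phi u := by
      have : Real.exp 0 < Real.exp (phi u) := by
        rw [Real.exp_zero, hexpφ]; linarith
      exact Real.exp_lt_exp.1 this
    obtain ⟨a, hadef⟩ : ∃ a : ℝ, a = Real.exp (-phi u - 2*u) := ⟨_, rfl⟩
    obtain ⟨b, hbdef⟩ : ∃ b : ℝ, b = Real.exp (phi u - 2*u) := ⟨_, rfl⟩
    have ha0 : 0 < a := by rw [hadef]; exact Real.exp_pos _
    have hb0 : 0 < b := by rw [hbdef]; exact Real.exp_pos _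
    have ha1 : a < 1 := by rw [hadef]; exact Real.exp_lt_one_iff.2 (by linarith)
    have hb1 : b < 1 := by rw [hbdef]; exact Real.exp_lt_one_iff.2 (by linarith)
    have ha : a = (c - s)/E := by
      rw [hadef, show -phi u - 2*u = -phi u + -(2*u) by ring, Real.exp_add, hexpnegφ,
        Real.exp_neg, ← hEdef, div_eq_mul_inv]
    have hb : b = (c + s)/E := by
      rw [hbdef, show phi u - 2*u = phi u + -(2*u) by ring, Real.exp_add, hexpφ,
        Real.exp_neg, ← hEdef, div_eq_mul_inv]
    have h1a : 0 < 1 - a := by linarith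
    have h1b : 0 < 1 - b := by linarith
    have hkey : Real.log (1 - a) + Real.log (1 - b) = -(2*u) := by
      have hprod : (1 - a) * (1 - b) = E⁻¹ := by
        rw [ha, hb]
        field_simp
        linear_combination -hs2 - hcE
      have := congrArg Real.log hprod
      rwa [Real.log_mul h1a.ne' h1b.ne', Real.log_inv, hEdef, Real.log_exp] at this
    -- the logarithm of the ratio
    have hnum : Real.exp (phi u) - Real.exp (-(2*u)) = Real.exp (phi u) * (1 - a) := by
      rw [hexpφ, ha, Real.exp_neg, ← hEdef]
      field_simp
      linear_combination -hs2
    have hlogratio : Real.log ((Real.exp (phi u) - Real.exp (-(2*u))) / (1 - b)) =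
        phi u + Real.log (1 - a) - Real.log (1 - b) := by
      rw [hnum, Real.log_div (mul_pos (Real.exp_pos _) h1a).ne' h1b.ne',
        Real.log_mul (Real.exp_pos _).ne' h1a.ne', Real.log_exp]
    -- derivative
    obtain ⟨P, hP⟩ := phi_hasDerivAt hc1'
    have h2x : HasDerivAt (fun x : ℝ => 2*x) 2 u := by
      simpa using (hasDerivAt_id u).const_mul 2
    have hA : HasDerivAt (fun x : ℝ => Real.exp (-phi x - 2*x)) (a * (-P - 2)) u := by
      have hinner : HasDerivAt (fun x : ℝ => -phi x - 2*x) (-P - 2) u := hP.neg.sub h2x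
      rw [hadef]; exact hinner.exp
    have hB : HasDerivAt (fun x : ℝ => Real.exp (phi x - 2*x)) (b * (P - 2)) u := by
      have hinner : HasDerivAt (fun x : ℝ => phi x - 2*x) (P - 2) u := hP.sub h2x
      rw [hbdef]; exact hinner.exp
    have hLa : HasDerivAt Li2 (-Real.log (1 - a)/a) (Real.exp (-phi u - 2*u)) := by
      rw [← hadef]; exact hasDerivAt_Li2 ha0 ha1
    have hLb : HasDerivAt Li2 (-Real.log (1 - b)/b) (Real.exp (phi u - 2*u)) := by
      rw [← hbdef]; exact hasDerivAt_Li2 hb0 hb1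
    have hprod2 : HasDerivAt (fun x : ℝ => 2*x*phi x) (2 * phi u + 2*u*P) u := by
      exact h2x.mul hP
    have hraw : HasDerivAt Sfun
        (-Real.log (1 - a)/a * (a * (-P - 2)) - -Real.log (1 - b)/b * (b * (P - 2)) +
          (2 * phi u + 2*u*P)) u := by
      have h := ((hLa.comp u hA).sub (hLb.comp u hB)).add hprod2
      unfold Sfun
      exact h
    have hval : -Real.log (1 - a)/a * (a * (-P - 2)) - -Real.log (1 - b)/b * (b * (P - 2)) +
        (2 * phi u + 2*u*P) =
        2 * Real.log ((Real.exp (phi u) - Real.exp (-(2*u))) / (1 - b)) := by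
      have e1 : -Real.log (1 - a)/a * (a * (-P - 2)) = Real.log (1 - a) * (P + 2) := by
        field_simp
        ring
      have e2 : -Real.log (1 - b)/b * (b * (P - 2)) = -(Real.log (1 - b) * (P - 2)) := by
        field_simp
      rw [hlogratio, e1, e2]
      linear_combination P * hkey
    constructor
    · rw [← hbdef, ← hval]
      exact hraw
    · -- ratio equals ell
      congr 1
      obtain ⟨F, hFdef⟩ : ∃ F : ℝ, F = Real.exp (-(2*u)) := ⟨_, rfl⟩
      have hEF : E * F = 1 := by
        rw [hEdef, hFdef, ← Real.exp_add]; simp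
      have h2c : 2*c = E + F - 1 := by
        rw [hcdef, hEdef, hFdef, Real.cosh_eq]; ring
      have hcosh : Real.cosh (2*u) = c + 1/2 := by rw [hcdef]; ring
      have hsqrt : Real.sqrt ((2*Real.cosh (2*u)+1) * (2*Real.cosh (2*u)-3)) = 2*s := by
        rw [hcosh, show (2*(c+1/2)+1)*(2*(c+1/2)-3) = (2*s)^2 by nlinarith [hs2]]
        exact Real.sqrt_sq (by linarith)
      have hSh2 : Real.sinh (2*u) = (E - F)/2 := by
        rw [hEdef, hFdef, Real.sinh_eq]
      have hcosh4 : Real.cosh (4*u) = (E*E + F*F)/2 := by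
        rw [Real.cosh_eq, show (4:ℝ)*u = 2*u + 2*u by ring,
          show -(2*u + 2*u) = -(2*u) + -(2*u) by ring, Real.exp_add, Real.exp_add,
          ← hEdef, ← hFdef]
      have hbF : Real.exp (phi u - 2*u) = (c+s)*F := by
        rw [show phi u - 2*u = phi u + -(2*u) by ring, Real.exp_add, hexpφ, ← hFdef]
      have hbb : b = (c+s)*F := by rw [hbdef, hbF]
      unfold ell
      rw [hexpφ, ← hFdef, hbF, hsqrt, hcosh4, hSh2, hcosh]
      congr 1
      rw [div_eq_iff (by rw [← hbb]; exact h1b.ne')]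
      linear_combination (F - 2*F^2 + 2*c*F) * hs2 +
        (1/2 - 3/2*F + 1/2*E + s - 1/2*s*F - 1/2*s*F^2 - 1/2*s*E*F - s^2*F + c - 1/2*c*F
          - 1/2*c*F^2 - 1/2*c*E*F + c^2*F) * h2c +
        (-1 - s*F - c*F + 2*c*s + 2*c^2) * hEF
  refine ⟨fun u hu => ((main u hu).1).differentiableAt.differentiableWithinAt, fun u hu =>
    ⟨(main u hu).1.deriv, (main u hu).2⟩⟩
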